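/- arXiv:math/0409080 — 2 statements merged into one kernel-verified Lean document; each statement's English description precedes it below -/
import Mathlib

section
/- Let M and N be matroids with finite disjoint ground sets S and T, let L be the free product M □ N, and let U ⊆ S ∪ T with |U| = |S| and rk_L(U) = rk(M). Then either every element of S \ U is an isthmus (coloop) of M, or every element of U ∩ T is a loop of N. -/
open Set Matroid

/-- The rank of a set `X` in a matroid `M`: the maximum cardinality of an
independent subset of `X`.  For `X = M.E` this is the rank of `M`. -/
noncomputable def mrk {α : Type*} (M : Matroid α) (X : Set α) : ℕ :=
  sSup (Set.ncard '' {I | M.Indep I ∧ I ⊆ X})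

/-- A loop of a matroid `N` is an element contained in no independent set of `N`. -/
def IsLoopOf {α : Type*} (N : Matroid α) (e : α) : Prop := ∀ I, N.Indep I → e ∉ I

/-- An isthmus (coloop) of a matroid `M` is an element contained in every basis of `M`. -/
def IsIsthmusOf {α : Type*} (M : Matroid α) (e : α) : Prop := ∀ B, M.IsBase B → e ∈ B

section Helpers

variable {α : Type*} {M : Matroid α} {X Y I : Set α}

lemma mrk_bdd (hfin : M.E.Finite) (X : Set α) :
    BddAbove (Set.ncard '' {I | M.Indep I ∧ I ⊆ X}) := by
  refine ⟨M.E.ncard, ?_⟩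
  rintro n ⟨J, ⟨hJ, _⟩, rfl⟩
  exact ncard_le_ncard hJ.subset_ground hfin

lemma mrk_nonempty (M : Matroid α) (X : Set α) :
    (Set.ncard '' {I | M.Indep I ∧ I ⊆ X}).Nonempty :=
  ⟨0, ∅, ⟨M.empty_indep, empty_subset _⟩, by simp⟩

lemma le_mrk (hfin : M.E.Finite) (hI : M.Indep I) (hIX : I ⊆ X) : I.ncard ≤ mrk M X :=
  le_csSup (mrk_bdd hfin X) ⟨I, ⟨hI, hIX⟩, rfl⟩

lemma mrk_le {n : ℕ} (h : ∀ I, M.Indep I → I ⊆ X → I.ncard ≤ n) : mrk M X ≤ n := by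
  apply csSup_le (mrk_nonempty M X)
  rintro m ⟨J, ⟨hJ, hJX⟩, rfl⟩
  exact h J hJ hJX

lemma exists_mrk (hfin : M.E.Finite) (X : Set α) :
    ∃ I, M.Indep I ∧ I ⊆ X ∧ I.ncard = mrk M X := by
  have h : mrk M X ∈ Set.ncard '' {I | M.Indep I ∧ I ⊆ X} :=
    Nat.sSup_mem (mrk_nonempty M X) (mrk_bdd hfin X)
  obtain ⟨I, ⟨hI, hIX⟩, hcard⟩ := h
  exact ⟨I, hI, hIX, hcard⟩

lemma mrk_indep_eq (hfin : M.E.Finite) (hI : M.Indep I) : mrk M I = I.ncard := by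
  refine le_antisymm (mrk_le fun J _ hJI => ncard_le_ncard hJI
    (hfin.subset hI.subset_ground)) (le_mrk hfin hI subset_rfl)

lemma mrk_mono (hfin : M.E.Finite) (hXY : X ⊆ Y) : mrk M X ≤ mrk M Y := by
  obtain ⟨I, hI, hIX, hcard⟩ := exists_mrk hfin X
  exact hcard ▸ le_mrk hfin hI (hIX.trans hXY)

lemma mrk_le_add (hfin : M.E.Finite) (hXfin : X.Finite) (A : Set α) :
    mrk M X ≤ mrk M A + (X \ A).ncard := by
  obtain ⟨I, hI, hIX, hcard⟩ := exists_mrk hfin X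
  have hIfin : I.Finite := hXfin.subset hIX
  have h1 : (I ∩ A).ncard ≤ mrk M A :=
    le_mrk hfin (hI.subset inter_subset_left) inter_subset_right
  have h2 : (I \ A).ncard ≤ (X \ A).ncard :=
    ncard_le_ncard (diff_subset_diff_left hIX) (hXfin.diff)
  have h3 : (I ∩ A).ncard + (I \ A).ncard = I.ncard :=
    ncard_inter_add_ncard_diff_eq_ncard I A hIfin
  omega

lemma base_ncard_eq (hfin : M.E.Finite) {B : Set α} (hB : M.IsBase B) :
    B.ncard = mrk M M.E := by
  refine le_antisymm (le_mrk hfin hB.indep hB.subset_ground) ?_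
  obtain ⟨I, hI, hIE, hcard⟩ := exists_mrk hfin M.E
  obtain ⟨B', hB', hIB'⟩ := hI.exists_isBase_superset
  have : I.ncard ≤ B'.ncard := ncard_le_ncard hIB' (hfin.subset hB'.subset_ground)
  rw [← hcard, hB.ncard_eq_ncard_of_isBase hB'] at *
  omega

end Helpers

/-- If `L = M □ N`, `U ⊆ S ∪ T`, `|U| = |S|` and `rk_L(U) = rk(M)`, then either every
element of `S \ U` is an isthmus of `M`, or every element of `U ∩ T` is a loop of `N`. -/
theorem stmt_8 {α : Type*} (M N : Matroid α) (S T : Set α)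
    (hS : S.Finite) (hT : T.Finite) (hMS : M.E = S) (hNT : N.E = T)
    (hST : Disjoint S T)
    (L : Matroid α) (hLE : L.E = S ∪ T)
    (hLI : ∀ A : Set α, L.Indep A ↔ A ⊆ S ∪ T ∧ M.Indep (A ∩ S) ∧
      (A ∩ T).ncard - mrk N (A ∩ T) ≤ mrk M S - mrk M (A ∩ S))
    (U : Set α) (hU : U ⊆ S ∪ T) (hUcard : U.ncard = S.ncard)
    (hrk : mrk L U = mrk M S) :
    (∀ e ∈ S \ U, IsIsthmusOf M e) ∨ (∀ e ∈ U ∩ T, IsLoopOf N e) := by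
  have hMfin : M.E.Finite := hMS ▸ hS
  have hNfin : N.E.Finite := hNT ▸ hT
  have hLfin : L.E.Finite := hLE ▸ hS.union hT
  set A : Set α := U ∩ S with hA
  set B : Set α := U ∩ T with hB
  have hAS : A ⊆ S := inter_subset_right
  have hBT : B ⊆ T := inter_subset_right
  have hAU : A ⊆ U := inter_subset_left
  have hBU : B ⊆ U := inter_subset_left
  have hAfin : A.Finite := hS.subset hAS
  have hBfin : B.Finite := hT.subset hBT
  have hABdisj : Disjoint A B := hST.mono hAS hBT
  have hUAB : U = A ∪ B := by
    rw [hA, hB, ← inter_union_distrib_left, inter_eq_left.mpr hU]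
  have hUc : A.ncard + B.ncard = S.ncard := by
    rw [← hUcard, hUAB, ncard_union_eq hABdisj hAfin hBfin]
  have hSc : (S \ A).ncard + A.ncard = S.ncard := by
    rw [ncard_diff hAS hAfin]
    have := ncard_le_ncard hAS hS
    omega
  have hBcard : B.ncard = (S \ A).ncard := by omega
  -- maximal independent subsets of A and B
  obtain ⟨I, hI, hIA, hIc⟩ := exists_mrk hMfin A
  obtain ⟨J, hJ, hJB, hJc⟩ := exists_mrk hNfin B
  have hrA_le : mrk M A ≤ mrk M S := mrk_mono hMfin hAS
  have hrB_le : mrk N B ≤ B.ncard := hJc ▸ ncard_le_ncard hJB hBfin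
  have hIS : I ⊆ S := hIA.trans hAS
  have hJT : J ⊆ T := hJB.trans hBT
  have hIfin : I.Finite := hAfin.subset hIA
  have hJfin : J.Finite := hBfin.subset hJB
  by_cases hcase : mrk M S - mrk M A + mrk N B ≤ B.ncard
  · -- loops case
    right
    -- choose K ⊆ B \ J with |K| = rk M - rk_M A
    have hBJcard : (B \ J).ncard = B.ncard - J.ncard := ncard_diff hJB hJfin
    obtain ⟨K, hKBJ, hKc⟩ :
        ∃ K ⊆ B \ J, K.ncard = mrk M S - mrk M A := by
      apply Set.exists_subset_card_eq
      omega
    have hKB : K ⊆ B := hKBJ.trans diff_subset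
    have hKT : K ⊆ T := hKB.trans hBT
    have hKfin : K.Finite := hBfin.subset hKB
    set C : Set α := I ∪ (J ∪ K) with hC
    have hJKT : J ∪ K ⊆ T := union_subset hJT hKT
    have hCS : C ∩ S = I := by
      rw [hC, union_inter_distrib_right, inter_eq_left.mpr hIS,
        (hST.symm.mono_left hJKT).inter_eq, union_empty]
    have hCT : C ∩ T = J ∪ K := by
      rw [hC, union_inter_distrib_right, (hST.mono_left hIS).inter_eq,
        inter_eq_left.mpr hJKT, empty_union]
    have hJKdisj : Disjoint J K := disjoint_sdiff_right.mono_right hKBJ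
    have hJKcard : (J ∪ K).ncard = J.ncard + K.ncard :=
      ncard_union_eq hJKdisj hJfin hKfin
    have hJKrk : mrk N (J ∪ K) ≥ J.ncard := le_mrk hNfin hJ subset_union_left
    have hCindep : L.Indep C := by
      rw [hLI, hCS, hCT]
      refine ⟨union_subset (hIS.trans subset_union_left)
        (hJKT.trans subset_union_right), hI, ?_⟩
      rw [mrk_indep_eq hMfin hI]
      omega
    have hCU : C ⊆ U := union_subset (hIA.trans hAU)
      (union_subset (hJB.trans hBU) (hKB.trans hBU))
    have hCcard : C.ncard = I.ncard + (J.ncard + K.ncard) := by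
      rw [hC, ncard_union_eq (hST.mono hIS hJKT) hIfin (hJfin.union hKfin), hJKcard]
    have hCle : C.ncard ≤ mrk L U := le_mrk hLfin hCindep hCU
    have hrB0 : mrk N B = 0 := by omega
    intro e he I' hI' heI'
    have h1 : ({e} : Set α).ncard ≤ mrk N B :=
      le_mrk hNfin (hI'.subset (singleton_subset_iff.mpr heI'))
        (singleton_subset_iff.mpr he)
    simp [ncard_singleton] at h1
    omega
  · -- isthmus case
    left
    set C : Set α := I ∪ B with hC
    have hCS : C ∩ S = I := by
      rw [hC, union_inter_distrib_right, inter_eq_left.mpr hIS,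
        (hST.symm.mono_left hBT).inter_eq, union_empty]
    have hCT : C ∩ T = B := by
      rw [hC, union_inter_distrib_right, (hST.mono_left hIS).inter_eq,
        inter_eq_left.mpr hBT, empty_union]
    have hCindep : L.Indep C := by
      rw [hLI, hCS, hCT]
      refine ⟨union_subset (hIS.trans subset_union_left)
        (hBT.trans subset_union_right), hI, ?_⟩
      rw [mrk_indep_eq hMfin hI]
      omega
    have hCU : C ⊆ U := union_subset (hIA.trans hAU) hBU
    have hCcard : C.ncard = I.ncard + B.ncard :=
      ncard_union_eq (hST.mono hIS hBT) hIfin hBfin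
    have hCle : C.ncard ≤ mrk L U := le_mrk hLfin hCindep hCU
    have hup : mrk M S ≤ mrk M A + (S \ A).ncard := mrk_le_add hMfin hS A
    -- so mrk M S = mrk M A + |S \ A|
    intro e he Bs hBs
    by_contra heBs
    obtain ⟨heS, heU⟩ := he
    have heA : e ∉ A := fun h => heU (hAU h)
    have heSA : e ∈ S \ A := ⟨heS, heA⟩
    have hBsS : Bs ⊆ S \ {e} := subset_diff_singleton (hMS ▸ hBs.subset_ground) heBs
    have hBscard : Bs.ncard = mrk M S := by
      rw [base_ncard_eq hMfin hBs, hMS]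
    have h1 : Bs.ncard ≤ mrk M (S \ {e}) := le_mrk hMfin hBs.indep hBsS
    have h2 : mrk M (S \ {e}) ≤ mrk M A + ((S \ {e}) \ A).ncard :=
      mrk_le_add hMfin (hS.diff) A
    have h3 : ((S \ {e}) \ A).ncard = (S \ A).ncard - 1 := by
      rw [diff_diff_comm, ncard_diff_singleton_of_mem heSA]
    have h4 : 1 ≤ (S \ A).ncard :=
      (ncard_pos (hS.diff)).mpr ⟨e, heSA⟩
    omega
end

section
/- Let M and N be matroids with finite disjoint ground sets S and T, let L be the free product M □ N, and let U ⊆ S ∪ T with |U| = |S|. Suppose every element of V ∩ S is an isthmus (coloop) of M, where V = (S ∪ T) \ U. Then the bases of the restriction L|U are exactly the sets of the form A ∪ (U ∩ T), where A is a basis of the restriction M|(U ∩ S). -/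
open Set Matroid

lemma mrk_le_ncard {α : Type*} (M : Matroid α) {X : Set α} (hX : X.Finite) :
    mrk M X ≤ X.ncard :=
  csSup_le' (by rintro n ⟨I, ⟨_, hIX⟩, rfl⟩; exact Set.ncard_le_ncard hIX hX)

lemma ncard_le_mrk {α : Type*} {M : Matroid α} (hE : M.E.Finite) {I X : Set α}
    (hI : M.Indep I) (hIX : I ⊆ X) : I.ncard ≤ mrk M X :=
  le_csSup ⟨M.E.ncard, by
    rintro n ⟨J, ⟨hJ, _⟩, rfl⟩
    exact Set.ncard_le_ncard hJ.subset_ground hE⟩ ⟨I, ⟨hI, hIX⟩, rfl⟩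

/-- Let `L = M □ N`, `U ⊆ S ∪ T` with `|U| = |S|`, and suppose every element of
`V ∩ S` is an isthmus of `M`, where `V = (S ∪ T) \ U`.  Then the bases of `L|U` are
exactly the sets `A ∪ (U ∩ T)` where `A` is a basis of `M|(U ∩ S)`. -/
theorem stmt_9 {α : Type*} (M N : Matroid α) (S T : Set α)
    (hS : S.Finite) (hT : T.Finite) (hMS : M.E = S) (hNT : N.E = T)
    (hST : Disjoint S T)
    (L : Matroid α) (hLE : L.E = S ∪ T)
    (hLI : ∀ A : Set α, L.Indep A ↔ A ⊆ S ∪ T ∧ M.Indep (A ∩ S) ∧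
      (A ∩ T).ncard - mrk N (A ∩ T) ≤ mrk M S - mrk M (A ∩ S))
    (U : Set α) (hU : U ⊆ S ∪ T) (hUcard : U.ncard = S.ncard)
    (hVS : ∀ e ∈ ((S ∪ T) \ U) ∩ S, IsIsthmusOf M e) :
    ∀ B : Set α, (L ↾ U).IsBase B ↔ ∃ A, (M ↾ (U ∩ S)).IsBase A ∧ B = A ∪ (U ∩ T) := by
  set S' : Set α := U ∩ S with hS'def
  set T' : Set α := U ∩ T with hT'def
  set C : Set α := S \ U with hCdef
  have hS'S : S' ⊆ S := inter_subset_right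
  have hT'T : T' ⊆ T := inter_subset_right
  have hS'fin : S'.Finite := hS.subset hS'S
  have hT'fin : T'.Finite := hT.subset hT'T
  have hCfin : C.Finite := hS.subset diff_subset
  have hUfin : U.Finite := (hS.union hT).subset hU
  have hUeq : U = S' ∪ T' := by
    rw [hS'def, hT'def, ← inter_union_distrib_left, inter_eq_self_of_subset_left hU]
  have hdisjS'T' : Disjoint S' T' := hST.mono hS'S hT'T
  have hSeq : S = S' ∪ C := by
    rw [hS'def, hCdef, inter_comm, inter_union_diff]
  have hdisjS'C : Disjoint S' C :=
    Disjoint.mono_left inter_subset_left disjoint_sdiff_right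
  have hcardTC : T'.ncard = C.ncard := by
    have h1 : S'.ncard + T'.ncard = U.ncard := by
      rw [hUeq, ncard_union_eq hdisjS'T' hS'fin hT'fin]
    have h2 : S'.ncard + C.ncard = S.ncard := by
      rw [hSeq, ncard_union_eq hdisjS'C hS'fin hCfin]
    omega
  -- every element of C is in every base of M
  have hColoop : ∀ e ∈ C, ∀ B, M.IsBase B → e ∈ B := by
    intro e he B hB
    exact hVS e ⟨⟨Or.inl he.1, he.2⟩, he.1⟩ B hB
  -- if A is M-independent and disjoint from C (e.g. A ⊆ S'), then A ∪ C is M-independent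
  have hunionC : ∀ A : Set α, M.Indep A → M.Indep (A ∪ C) := by
    intro A hA
    obtain ⟨B0, hB0, hAB0⟩ := hA.exists_isBase_superset
    exact hB0.indep.subset (union_subset hAB0 fun e he => hColoop e he B0 hB0)
  -- key: for any base A of M ↾ S', the set A ∪ T' is L-independent
  have hAT'indep : ∀ A : Set α, (M ↾ S').IsBase A → L.Indep (A ∪ T') := by
    intro A hA
    have hA' : M.IsBasis' A S' := isBase_restrict_iff'.1 hA
    have hAindep : M.Indep A := hA'.indep
    have hAS' : A ⊆ S' := hA'.subset
    have hAS : A ⊆ S := hAS'.trans hS'S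
    have hAfin : A.Finite := hS.subset hAS
    have hdisjAC : Disjoint A C := hdisjS'C.mono_left hAS'
    have hdisjAT' : Disjoint A T' := hdisjS'T'.mono_left hAS'
    have hBS : (A ∪ T') ∩ S = A := by
      rw [union_inter_distrib_right, inter_eq_self_of_subset_left hAS,
        (hST.symm.mono_left hT'T).inter_eq, union_empty]
    have hBT : (A ∪ T') ∩ T = T' := by
      rw [union_inter_distrib_right, (hST.mono_left hAS).inter_eq,
        inter_eq_self_of_subset_left hT'T, empty_union]
    rw [hLI, hBS, hBT]
    refine ⟨union_subset (hAS.trans subset_union_left) (hT'T.trans subset_union_right),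
      hAindep, ?_⟩
    have hle1 : T'.ncard - mrk N T' ≤ T'.ncard := Nat.sub_le _ _
    have hle2 : T'.ncard + mrk M A ≤ mrk M S := by
      have h3 : mrk M A ≤ A.ncard := mrk_le_ncard M hAfin
      have h4 : (A ∪ C).ncard ≤ mrk M S := by
        exact ncard_le_mrk (hMS ▸ hS) (hunionC A hAindep)
          (union_subset hAS diff_subset)
      rw [ncard_union_eq hdisjAC hAfin hCfin] at h4
      omega
    omega
  -- cardinality bound: any (L ↾ U)-independent set has at most |A| + |T'| elements
  have hmax : ∀ A : Set α, (M ↾ S').IsBase A → ∀ B' : Set α, (L ↾ U).Indep B' →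
      (B' ∩ S).ncard ≤ A.ncard ∧ (B' ∩ T).ncard ≤ T'.ncard ∧
      B'.ncard = (B' ∩ S).ncard + (B' ∩ T).ncard := by
    intro A hA B' hB'
    rw [restrict_indep_iff] at hB'
    obtain ⟨hB'L, hB'U⟩ := hB'
    have hB'ST : B' ⊆ S ∪ T := hB'U.trans hU
    have hB'Sindep : (M ↾ S').Indep (B' ∩ S) := by
      rw [restrict_indep_iff]
      exact ⟨((hLI B').1 hB'L).2.1, inter_subset_inter_left S hB'U⟩
    obtain ⟨A1, hA1, hBA1⟩ := hB'Sindep.exists_isBase_superset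
    have hA1S' : A1 ⊆ S' := (isBase_restrict_iff'.1 hA1).subset
    have h1 : (B' ∩ S).ncard ≤ A1.ncard :=
      ncard_le_ncard hBA1 (hS'fin.subset hA1S')
    have h2 : A1.ncard = A.ncard := hA1.ncard_eq_ncard_of_isBase hA
    have h3 : (B' ∩ T).ncard ≤ T'.ncard :=
      ncard_le_ncard (inter_subset_inter_left T hB'U) hT'fin
    have h4 : B' = (B' ∩ S) ∪ (B' ∩ T) := by
      rw [← inter_union_distrib_left, inter_eq_self_of_subset_left hB'ST]
    have h5 : B'.ncard = (B' ∩ S).ncard + (B' ∩ T).ncard := by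
      have := ncard_union_eq (s := B' ∩ S) (t := B' ∩ T)
        (hST.mono inter_subset_right inter_subset_right)
        (hS.subset inter_subset_right) (hT.subset inter_subset_right)
      rw [← h4] at this
      exact this
    exact ⟨h2 ▸ h1, h3, h5⟩
  -- claim: for any base A of M ↾ S', the set A ∪ T' is a base of L ↾ U
  have hbase : ∀ A : Set α, (M ↾ S').IsBase A → (L ↾ U).IsBase (A ∪ T') := by
    intro A hA
    have hAS' : A ⊆ S' := (isBase_restrict_iff'.1 hA).subset
    have hAfin : A.Finite := hS'fin.subset hAS'
    have hdisjAT' : Disjoint A T' := hdisjS'T'.mono_left hAS'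
    have hind : (L ↾ U).Indep (A ∪ T') := by
      rw [restrict_indep_iff]
      exact ⟨hAT'indep A hA,
        union_subset (hAS'.trans inter_subset_left) inter_subset_left⟩
    obtain ⟨B1, hB1, hsub⟩ := hind.exists_isBase_superset
    obtain ⟨h1, h2, h3⟩ := hmax A hA B1 hB1.indep
    have hB1U : B1 ⊆ U := hB1.subset_ground.trans_eq (by simp)
    have hcard : (A ∪ T').ncard = A.ncard + T'.ncard :=
      ncard_union_eq hdisjAT' hAfin hT'fin
    have hle : (A ∪ T').ncard ≤ B1.ncard :=
      ncard_le_ncard hsub (hUfin.subset hB1U)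
    have : A ∪ T' = B1 :=
      eq_of_subset_of_ncard_le hsub (by omega) (hUfin.subset hB1U)
    rwa [this]
  intro B
  constructor
  · intro hB
    obtain ⟨A0, hA0⟩ := (M ↾ S').exists_isBase
    have hA0S' : A0 ⊆ S' := (isBase_restrict_iff'.1 hA0).subset
    have hA0fin : A0.Finite := hS'fin.subset hA0S'
    have hBU : B ⊆ U := hB.subset_ground.trans_eq (by simp)
    have hBST : B ⊆ S ∪ T := hBU.trans hU
    obtain ⟨h1, h2, h3⟩ := hmax A0 hA0 B hB.indep
    have hBcard : B.ncard = A0.ncard + T'.ncard := by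
      have := (hbase A0 hA0).ncard_eq_ncard_of_isBase hB
      have hcard : (A0 ∪ T').ncard = A0.ncard + T'.ncard :=
        ncard_union_eq (hdisjS'T'.mono_left hA0S') hA0fin hT'fin
      omega
    -- B ∩ T = T'
    have hsub' : B ∩ T ⊆ T' := inter_subset_inter_left T hBU
    have h3' : (B ∩ T).ncard ≤ T'.ncard := ncard_le_ncard hsub' hT'fin
    have h6 : T'.ncard ≤ (B ∩ T).ncard := by omega
    have hBT : B ∩ T = T' :=
      eq_of_subset_of_ncard_le hsub' h6 hT'fin
    -- B ∩ S is a base of M ↾ S'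
    have hBSindep : (M ↾ S').Indep (B ∩ S) := by
      rw [restrict_indep_iff]
      exact ⟨((hLI B).1 (hB.indep.of_restrict)).2.1, inter_subset_inter_left S hBU⟩
    obtain ⟨A1, hA1, hBA1⟩ := hBSindep.exists_isBase_superset
    have hA1S' : A1 ⊆ S' := (isBase_restrict_iff'.1 hA1).subset
    have hA1card : A1.ncard = A0.ncard := hA1.ncard_eq_ncard_of_isBase hA0
    have hBS : B ∩ S = A1 := by
      refine eq_of_subset_of_ncard_le hBA1 ?_ (hS'fin.subset hA1S')
      omega
    refine ⟨B ∩ S, hBS ▸ hA1, ?_⟩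
    rw [← hBT, ← inter_union_distrib_left, inter_eq_self_of_subset_left hBST]
  · rintro ⟨A, hA, rfl⟩
    exact hbase A hA
end
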